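/- For every n ≥ 1, the discrepancy of the Greater-Than function GT_n with respect to the distribution μ_n satisfies Disc_{μ_n}(GT_n) = max over all rectangles R = S × T of |D_n(R)| < 20/√n. -/

import Mathlib

/-- The value of a bit string `x ∈ {0,1}^n`, with bit 1 (index 0) most significant:
`val x = Σ_{i=1}^n x_i · 2^{n-i}`. -/
def val {n : ℕ} (x : Fin n → Bool) : ℕ :=
  ∑ i : Fin n, if x i then 2 ^ (n - 1 - (i : ℕ)) else 0

/-- The hard distribution `μ_n` for Greater-Than: `μ_n(x,y) = (1/n)·2^{-(2n-k)}` if `x ≠ y`,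
where `k` is the smallest index (1-based) with `x_k ≠ y_k`, and `μ_n(x,y) = 0` if `x = y`. -/
noncomputable def muGT (n : ℕ) (x y : Fin n → Bool) : ℝ :=
  if h : x = y then 0
  else
    have hne : (Finset.univ.filter fun i => x i ≠ y i).Nonempty := by
      obtain ⟨i, hi⟩ := Function.ne_iff.mp h
      exact ⟨i, Finset.mem_filter.mpr ⟨Finset.mem_univ i, hi⟩⟩
    (1 / n) *
      (2 : ℝ) ^ (-(2 * (n : ℤ) -
        ((((Finset.univ.filter fun i => x i ≠ y i).min' hne : Fin n) : ℕ) + 1)))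

/-- The signed discrepancy of the Greater-Than function `GT_n` (where `GT_n(x,y)=1` iff
`val x > val y`) on the rectangle `S × T` with respect to `μ_n`:
`D_n(S×T) = Σ_{(x,y)∈S×T, GT=1} μ_n(x,y) − Σ_{(x,y)∈S×T, GT=0} μ_n(x,y)`. -/
noncomputable def discGT (n : ℕ) (S T : Finset (Fin n → Bool)) : ℝ :=
  ∑ x ∈ S, ∑ y ∈ T, (if val y < val x then muGT n x y else - muGT n x y)


namespace GTAux

open Finset

variable {n : ℕ}

noncomputable def w (n k : ℕ) : ℝ := (1 / n) * (2:ℝ) ^ ((k:ℤ) + 1 - 2 * n)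

def Pk (n k : ℕ) : Finset (Fin n → Bool) :=
  univ.filter fun p => ∀ i : Fin n, k ≤ (i:ℕ) → p i = false

def cnt (S : Finset (Fin n → Bool)) (k : ℕ) (p : Fin n → Bool) : ℕ :=
  (S.filter fun x => ∀ i : Fin n, (i:ℕ) < k → x i = p i).card

def setBit (p : Fin n → Bool) (k : ℕ) (b : Bool) : Fin n → Bool :=
  fun i => if (i:ℕ) = k then b else p i

def trunc (k : ℕ) (x : Fin n → Bool) : Fin n → Bool :=
  fun i => if (i:ℕ) < k then x i else false

lemma trunc_mem_Pk (k : ℕ) (x : Fin n → Bool) : trunc k x ∈ Pk n k := by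
  simp only [Pk, mem_filter, mem_univ, true_and, trunc]
  intro i hi
  simp [Nat.not_lt.mpr hi]

lemma two_geom (m : ℕ) : ∑ j ∈ Finset.range m, 2 ^ j = 2 ^ m - 1 := by
  induction m with
  | zero => simp
  | succ m ih =>
    rw [Finset.sum_range_succ, ih]
    have : 1 ≤ 2 ^ m := Nat.one_le_two_pow
    omega

lemma val_lt (x y : Fin n → Bool) (k : Fin n)
    (hpre : ∀ i : Fin n, (i:ℕ) < (k:ℕ) → x i = y i) (hx : x k = true) (hy : y k = false) :
    _root_.val y < _root_.val x := by
  classical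
  have hsplit : ∀ z : Fin n → Bool, _root_.val z =
      (∑ i ∈ univ.filter (fun i : Fin n => (i:ℕ) < (k:ℕ)), if z i then 2 ^ (n - 1 - (i:ℕ)) else 0)
      + ((if z k then 2 ^ (n - 1 - (k:ℕ)) else 0)
        + ∑ i ∈ univ.filter (fun i : Fin n => (k:ℕ) < (i:ℕ)), if z i then 2 ^ (n - 1 - (i:ℕ)) else 0) := by
    intro z
    rw [_root_.val, ← Finset.sum_filter_add_sum_filter_not univ (fun i : Fin n => (i:ℕ) < (k:ℕ))]
    congr 1
    have : univ.filter (fun i : Fin n => ¬ (i:ℕ) < (k:ℕ))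
        = insert k (univ.filter (fun i : Fin n => (k:ℕ) < (i:ℕ))) := by
      ext i
      simp only [mem_filter, mem_univ, true_and, mem_insert]
      constructor
      · intro h
        rcases Nat.lt_or_ge (k:ℕ) (i:ℕ) with h' | h'
        · exact Or.inr h'
        · exact Or.inl (Fin.ext (by omega))
      · rintro (rfl | h) <;> omega
    rw [this, Finset.sum_insert (by simp)]
  have hR : (∑ i ∈ univ.filter (fun i : Fin n => (k:ℕ) < (i:ℕ)), if y i then 2 ^ (n - 1 - (i:ℕ)) else 0)
      ≤ 2 ^ (n - 1 - (k:ℕ)) - 1 := by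
    calc (∑ i ∈ univ.filter (fun i : Fin n => (k:ℕ) < (i:ℕ)), if y i then 2 ^ (n - 1 - (i:ℕ)) else 0)
        ≤ ∑ i ∈ univ.filter (fun i : Fin n => (k:ℕ) < (i:ℕ)), 2 ^ (n - 1 - (i:ℕ)) := by
          apply Finset.sum_le_sum; intro i _; split <;> simp
      _ = ∑ j ∈ (univ.filter (fun i : Fin n => (k:ℕ) < (i:ℕ))).image (fun i : Fin n => n - 1 - (i:ℕ)), 2 ^ j := by
          rw [Finset.sum_image]
          intro i hi j hj hij
          simp only [Finset.coe_filter, Finset.mem_coe, mem_filter, Set.mem_setOf_eq, mem_univ, true_and] at hi hj hij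
          exact Fin.ext (by omega)
      _ ≤ ∑ j ∈ Finset.range (n - 1 - (k:ℕ)), 2 ^ j := by
          apply Finset.sum_le_sum_of_subset
          intro j hj
          simp only [Finset.mem_image, mem_filter, mem_univ, true_and] at hj
          obtain ⟨i, hi, rfl⟩ := hj
          simp only [Finset.mem_range]
          omega
      _ = 2 ^ (n - 1 - (k:ℕ)) - 1 := two_geom _
  have h1 := hsplit x
  have h2 := hsplit y
  have hCeq : (∑ i ∈ univ.filter (fun i : Fin n => (i:ℕ) < (k:ℕ)), if y i then 2 ^ (n - 1 - (i:ℕ)) else 0)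
      = (∑ i ∈ univ.filter (fun i : Fin n => (i:ℕ) < (k:ℕ)), if x i then 2 ^ (n - 1 - (i:ℕ)) else 0) := by
    apply Finset.sum_congr rfl
    intro i hi
    simp only [mem_filter] at hi
    rw [hpre i hi.2]
  have hp : (1:ℕ) ≤ 2 ^ (n - 1 - (k:ℕ)) := Nat.one_le_two_pow
  rw [hx] at h1
  rw [hy] at h2
  simp only [if_true, if_false, Bool.false_eq_true] at h1 h2
  rw [hCeq] at h2
  omega

end GTAux
namespace GTAux
open Finset
variable {n : ℕ}

section mink
variable (x y : Fin n → Bool)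

lemma diff_nonempty (h : x ≠ y) : (Finset.univ.filter fun i => x i ≠ y i).Nonempty := by
  obtain ⟨i, hi⟩ := Function.ne_iff.mp h
  exact ⟨i, Finset.mem_filter.mpr ⟨Finset.mem_univ i, hi⟩⟩

/-- the first differing index -/
noncomputable def mink (h : x ≠ y) : Fin n :=
  (Finset.univ.filter fun i => x i ≠ y i).min' (diff_nonempty x y h)

lemma mink_diff (h : x ≠ y) : x (mink x y h) ≠ y (mink x y h) := by
  have := Finset.min'_mem (Finset.univ.filter fun i => x i ≠ y i) (diff_nonempty x y h)
  exact (Finset.mem_filter.mp this).2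

lemma mink_min (h : x ≠ y) (i : Fin n) (hi : (i:ℕ) < (mink x y h : ℕ)) : x i = y i := by
  by_contra hne
  have hmem : i ∈ Finset.univ.filter fun j => x j ≠ y j :=
    Finset.mem_filter.mpr ⟨Finset.mem_univ i, hne⟩
  have h2 : mink x y h ≤ i := Finset.min'_le _ i hmem
  rw [Fin.le_def] at h2
  omega

lemma muGT_eq (h : x ≠ y) : muGT n x y = w n ((mink x y h : ℕ)) := by
  rw [muGT, dif_neg h]
  show (1 / (n:ℝ)) * (2:ℝ) ^ (-(2 * (n : ℤ) -
      ((((Finset.univ.filter fun i => x i ≠ y i).min' (diff_nonempty x y h) : Fin n) : ℕ) + 1)))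
    = w n ((mink x y h : ℕ))
  rw [w, mink]
  congr 2
  omega

end mink

/-- helper: product of indicators vanishes -/
lemma ind_mul_ind_zero {P Q : Prop} [Decidable P] [Decidable Q] (h : ¬ (P ∧ Q)) :
    (if P then (1:ℝ) else 0) * (if Q then (1:ℝ) else 0) = 0 := by
  split_ifs with h1 h2 <;> simp_all

lemma pointwise (x y : Fin n → Bool) :
    (if val y < val x then muGT n x y else - muGT n x y) =
    ∑ k : Fin n, ∑ p ∈ Pk n (k:ℕ), w n (k:ℕ) *
      ((if (∀ i : Fin n, (i:ℕ) < (k:ℕ) → x i = p i) ∧ x k = true then (1:ℝ) else 0) *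
       (if (∀ i : Fin n, (i:ℕ) < (k:ℕ) → y i = p i) ∧ y k = false then (1:ℝ) else 0) -
       (if (∀ i : Fin n, (i:ℕ) < (k:ℕ) → x i = p i) ∧ x k = false then (1:ℝ) else 0) *
       (if (∀ i : Fin n, (i:ℕ) < (k:ℕ) → y i = p i) ∧ y k = true then (1:ℝ) else 0)) := by
  classical
  by_cases h : x = y
  · subst h
    rw [if_neg (lt_irrefl _), muGT, dif_pos rfl, neg_zero, eq_comm]
    apply Finset.sum_eq_zero
    intro k _
    apply Finset.sum_eq_zero
    intro p _
    ring
  · -- x ≠ y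
    have hdiff : x (mink x y h) ≠ y (mink x y h) := mink_diff x y h
    have hmin := mink_min x y h
    set k₀ := mink x y h with hk₀
    have hRHS : ∀ k : Fin n, k ∈ (univ : Finset (Fin n)) → k ≠ k₀ → (∑ p ∈ Pk n (k:ℕ), w n (k:ℕ) *
      ((if (∀ i : Fin n, (i:ℕ) < (k:ℕ) → x i = p i) ∧ x k = true then (1:ℝ) else 0) *
       (if (∀ i : Fin n, (i:ℕ) < (k:ℕ) → y i = p i) ∧ y k = false then (1:ℝ) else 0) -
       (if (∀ i : Fin n, (i:ℕ) < (k:ℕ) → x i = p i) ∧ x k = false then (1:ℝ) else 0) *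
       (if (∀ i : Fin n, (i:ℕ) < (k:ℕ) → y i = p i) ∧ y k = true then (1:ℝ) else 0))) = 0 := by
      intro k _ hk
      apply Finset.sum_eq_zero
      intro p _
      have key : ∀ bx bby : Bool, bx ≠ bby →
          ¬ (((∀ i : Fin n, (i:ℕ) < (k:ℕ) → x i = p i) ∧ x k = bx) ∧
             ((∀ i : Fin n, (i:ℕ) < (k:ℕ) → y i = p i) ∧ y k = bby)) := by
        rintro bx bby hb ⟨⟨hxp, hxk⟩, ⟨hyp, hyk⟩⟩
        have h1 : (k₀:ℕ) ≤ (k:ℕ) := by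
          have hne : x k ≠ y k := by rw [hxk, hyk]; exact hb
          have hmem : k ∈ Finset.univ.filter fun j => x j ≠ y j :=
            Finset.mem_filter.mpr ⟨Finset.mem_univ k, hne⟩
          have h2 : k₀ ≤ k := Finset.min'_le _ k hmem
          rw [Fin.le_def] at h2
          exact h2
        have h2 : ¬ ((k₀:ℕ) < (k:ℕ)) := fun hlt =>
          hdiff (by rw [hxp k₀ hlt, hyp k₀ hlt])
        exact hk (Fin.ext (by omega))
      rw [ind_mul_ind_zero (key true false (by simp)),
          ind_mul_ind_zero (key false true (by simp))]
      ring
    rw [Finset.sum_eq_single_of_mem k₀ (Finset.mem_univ k₀) hRHS]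
    have hpnot : ∀ p ∈ Pk n (k₀:ℕ), p ≠ trunc (k₀:ℕ) x →
        ∀ bx : Bool, ¬ ((∀ i : Fin n, (i:ℕ) < (k₀:ℕ) → x i = p i) ∧ x k₀ = bx) := by
      rintro p hp hpt bx ⟨hxp, _⟩
      apply hpt
      funext i
      by_cases hi : (i:ℕ) < (k₀:ℕ)
      · rw [trunc, if_pos hi, ← hxp i hi]
      · rw [trunc, if_neg hi]
        simp only [Pk, mem_filter, mem_univ, true_and] at hp
        exact hp i (by omega)
    rw [Finset.sum_eq_single_of_mem (trunc (k₀:ℕ) x) (trunc_mem_Pk _ x)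
      (fun p hp hpt => by
        rw [ind_mul_ind_zero (fun hc => (hpnot p hp hpt true) hc.1),
            ind_mul_ind_zero (fun hc => (hpnot p hp hpt false) hc.1)]
        ring)]
    have hxpre : ∀ i : Fin n, (i:ℕ) < (k₀:ℕ) → x i = trunc (k₀:ℕ) x i := by
      intro i hi; rw [trunc, if_pos hi]
    have hypre : ∀ i : Fin n, (i:ℕ) < (k₀:ℕ) → y i = trunc (k₀:ℕ) x i := by
      intro i hi; rw [trunc, if_pos hi, ← hmin i hi]
    rw [muGT_eq x y h]
    rcases Bool.eq_false_or_eq_true (x k₀) with hxb | hxb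
    · have hyb : y k₀ = false := by
        rcases Bool.eq_false_or_eq_true (y k₀) with h' | h'
        · exact absurd (by rw [hxb, h']) hdiff
        · exact h'
      rw [if_pos (val_lt x y k₀ hmin hxb hyb)]
      rw [if_pos ⟨hxpre, hxb⟩, if_pos ⟨hypre, hyb⟩,
          if_neg (by rintro ⟨_, hc⟩; rw [hxb] at hc; exact absurd hc (by simp)),
          if_neg (by rintro ⟨_, hc⟩; rw [hyb] at hc; exact absurd hc (by simp))]
      ring
    · have hyb : y k₀ = true := by
        rcases Bool.eq_false_or_eq_true (y k₀) with h' | h'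
        · exact h'
        · exact absurd (by rw [hxb, h']) hdiff
      have hlt : val x < val y := val_lt y x k₀ (fun i hi => (hmin i hi).symm) hyb hxb
      rw [if_neg (by omega)]
      rw [if_neg (by rintro ⟨_, hc⟩; rw [hxb] at hc; exact absurd hc (by simp)),
          if_neg (by rintro ⟨_, hc⟩; rw [hyb] at hc; exact absurd hc (by simp)),
          if_pos ⟨hxpre, hxb⟩, if_pos ⟨hypre, hyb⟩]
      ring
end GTAux
namespace GTAux
open Finset
variable {n : ℕ}

lemma sum_ind (S : Finset (Fin n → Bool)) (k : Fin n) (b : Bool) (p : Fin n → Bool) :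
    (∑ x ∈ S, if (∀ i : Fin n, (i:ℕ) < (k:ℕ) → x i = p i) ∧ x k = b then (1:ℝ) else 0)
      = (cnt S ((k:ℕ)+1) (setBit p (k:ℕ) b) : ℝ) := by
  rw [cnt, Finset.card_filter]
  push_cast
  apply Finset.sum_congr rfl
  intro x _
  apply if_congr _ rfl rfl
  constructor
  · rintro ⟨h1, h2⟩ i hi
    rw [setBit]
    by_cases hik : (i:ℕ) = (k:ℕ)
    · have : i = k := Fin.ext hik
      subst this
      rw [if_pos hik, h2]
    · rw [if_neg hik]
      exact h1 i (by omega)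
  · intro hall
    constructor
    · intro i hi
      have := hall i (by omega)
      rw [setBit, if_neg (by omega)] at this
      exact this
    · have := hall k (by omega)
      rw [setBit, if_pos rfl] at this
      exact this

lemma rect {α : Type*} (S T : Finset α) (c : ℝ) (A B C D : α → ℝ) :
    (∑ x ∈ S, ∑ y ∈ T, c * (A x * B y - C x * D y))
    = c * ((∑ x ∈ S, A x) * (∑ y ∈ T, B y) - (∑ x ∈ S, C x) * (∑ y ∈ T, D y)) := by
  rw [Finset.sum_mul_sum, Finset.sum_mul_sum, ← Finset.sum_sub_distrib, Finset.mul_sum]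
  apply Finset.sum_congr rfl
  intro x _
  rw [← Finset.sum_sub_distrib, Finset.mul_sum]

lemma discGT_eq (S T : Finset (Fin n → Bool)) :
    discGT n S T = ∑ k : Fin n, w n (k:ℕ) * ∑ p ∈ Pk n (k:ℕ),
      ((cnt S ((k:ℕ)+1) (setBit p (k:ℕ) true) : ℝ) * (cnt T ((k:ℕ)+1) (setBit p (k:ℕ) false) : ℝ)
       - (cnt S ((k:ℕ)+1) (setBit p (k:ℕ) false) : ℝ) * (cnt T ((k:ℕ)+1) (setBit p (k:ℕ) true) : ℝ)) := by
  rw [discGT]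
  calc (∑ x ∈ S, ∑ y ∈ T, (if val y < val x then muGT n x y else - muGT n x y))
      = ∑ x ∈ S, ∑ y ∈ T, ∑ k : Fin n, ∑ p ∈ Pk n (k:ℕ), w n (k:ℕ) *
        ((if (∀ i : Fin n, (i:ℕ) < (k:ℕ) → x i = p i) ∧ x k = true then (1:ℝ) else 0) *
         (if (∀ i : Fin n, (i:ℕ) < (k:ℕ) → y i = p i) ∧ y k = false then (1:ℝ) else 0) -
         (if (∀ i : Fin n, (i:ℕ) < (k:ℕ) → x i = p i) ∧ x k = false then (1:ℝ) else 0) *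
         (if (∀ i : Fin n, (i:ℕ) < (k:ℕ) → y i = p i) ∧ y k = true then (1:ℝ) else 0)) := by
        apply Finset.sum_congr rfl; intro x _
        apply Finset.sum_congr rfl; intro y _
        exact pointwise x y
    _ = ∑ x ∈ S, ∑ k : Fin n, ∑ y ∈ T, ∑ p ∈ Pk n (k:ℕ), w n (k:ℕ) *
        ((if (∀ i : Fin n, (i:ℕ) < (k:ℕ) → x i = p i) ∧ x k = true then (1:ℝ) else 0) *
         (if (∀ i : Fin n, (i:ℕ) < (k:ℕ) → y i = p i) ∧ y k = false then (1:ℝ) else 0) -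
         (if (∀ i : Fin n, (i:ℕ) < (k:ℕ) → x i = p i) ∧ x k = false then (1:ℝ) else 0) *
         (if (∀ i : Fin n, (i:ℕ) < (k:ℕ) → y i = p i) ∧ y k = true then (1:ℝ) else 0)) := by
        exact Finset.sum_congr rfl fun x _ => Finset.sum_comm
    _ = ∑ k : Fin n, ∑ x ∈ S, ∑ y ∈ T, ∑ p ∈ Pk n (k:ℕ), w n (k:ℕ) *
        ((if (∀ i : Fin n, (i:ℕ) < (k:ℕ) → x i = p i) ∧ x k = true then (1:ℝ) else 0) *
         (if (∀ i : Fin n, (i:ℕ) < (k:ℕ) → y i = p i) ∧ y k = false then (1:ℝ) else 0) -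
         (if (∀ i : Fin n, (i:ℕ) < (k:ℕ) → x i = p i) ∧ x k = false then (1:ℝ) else 0) *
         (if (∀ i : Fin n, (i:ℕ) < (k:ℕ) → y i = p i) ∧ y k = true then (1:ℝ) else 0)) :=
        Finset.sum_comm
    _ = ∑ k : Fin n, ∑ x ∈ S, ∑ p ∈ Pk n (k:ℕ), ∑ y ∈ T, w n (k:ℕ) *
        ((if (∀ i : Fin n, (i:ℕ) < (k:ℕ) → x i = p i) ∧ x k = true then (1:ℝ) else 0) *
         (if (∀ i : Fin n, (i:ℕ) < (k:ℕ) → y i = p i) ∧ y k = false then (1:ℝ) else 0) -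
         (if (∀ i : Fin n, (i:ℕ) < (k:ℕ) → x i = p i) ∧ x k = false then (1:ℝ) else 0) *
         (if (∀ i : Fin n, (i:ℕ) < (k:ℕ) → y i = p i) ∧ y k = true then (1:ℝ) else 0)) :=
        Finset.sum_congr rfl fun k _ => Finset.sum_congr rfl fun x _ => Finset.sum_comm
    _ = ∑ k : Fin n, ∑ p ∈ Pk n (k:ℕ), ∑ x ∈ S, ∑ y ∈ T, w n (k:ℕ) *
        ((if (∀ i : Fin n, (i:ℕ) < (k:ℕ) → x i = p i) ∧ x k = true then (1:ℝ) else 0) *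
         (if (∀ i : Fin n, (i:ℕ) < (k:ℕ) → y i = p i) ∧ y k = false then (1:ℝ) else 0) -
         (if (∀ i : Fin n, (i:ℕ) < (k:ℕ) → x i = p i) ∧ x k = false then (1:ℝ) else 0) *
         (if (∀ i : Fin n, (i:ℕ) < (k:ℕ) → y i = p i) ∧ y k = true then (1:ℝ) else 0)) :=
        Finset.sum_congr rfl fun k _ => Finset.sum_comm
    _ = ∑ k : Fin n, ∑ p ∈ Pk n (k:ℕ), w n (k:ℕ) *
        ((cnt S ((k:ℕ)+1) (setBit p (k:ℕ) true) : ℝ) * (cnt T ((k:ℕ)+1) (setBit p (k:ℕ) false) : ℝ)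
         - (cnt S ((k:ℕ)+1) (setBit p (k:ℕ) false) : ℝ) * (cnt T ((k:ℕ)+1) (setBit p (k:ℕ) true) : ℝ)) := by
        apply Finset.sum_congr rfl; intro k _
        apply Finset.sum_congr rfl; intro p _
        rw [rect S T (w n (k:ℕ)), sum_ind S k true p, sum_ind T k false p,
          sum_ind S k false p, sum_ind T k true p]
    _ = ∑ k : Fin n, w n (k:ℕ) * ∑ p ∈ Pk n (k:ℕ),
        ((cnt S ((k:ℕ)+1) (setBit p (k:ℕ) true) : ℝ) * (cnt T ((k:ℕ)+1) (setBit p (k:ℕ) false) : ℝ)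
         - (cnt S ((k:ℕ)+1) (setBit p (k:ℕ) false) : ℝ) * (cnt T ((k:ℕ)+1) (setBit p (k:ℕ) true) : ℝ)) := by
        apply Finset.sum_congr rfl; intro k _
        rw [Finset.mul_sum]
end GTAux
namespace GTAux
open Finset
variable {n : ℕ}

lemma cnt_split (S : Finset (Fin n → Bool)) (k : ℕ) (hk : k < n) (p : Fin n → Bool) :
    cnt S (k+1) (setBit p k false) + cnt S (k+1) (setBit p k true) = cnt S k p := by
  have h1 : ∀ b : Bool, (S.filter fun x => ∀ i : Fin n, (i:ℕ) < k+1 → x i = setBit p k b i)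
      = (S.filter fun x => ∀ i : Fin n, (i:ℕ) < k → x i = p i).filter
          (fun x => x ⟨k, hk⟩ = b) := by
    intro b
    rw [Finset.filter_filter]
    apply Finset.filter_congr
    intro x _
    constructor
    · intro hall
      constructor
      · intro i hi
        have := hall i (by omega)
        rw [setBit, if_neg (by omega)] at this
        exact this
      · have := hall ⟨k, hk⟩ (by simp)
        rw [setBit, if_pos rfl] at this
        exact this
    · rintro ⟨hpre, hb⟩ i hi
      rw [setBit]
      by_cases hik : (i:ℕ) = k
      · have : i = (⟨k, hk⟩ : Fin n) := Fin.ext hik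
        subst this
        rw [if_pos hik, hb]
      · rw [if_neg hik]
        exact hpre i (by omega)
  have h2 : ((S.filter fun x => ∀ i : Fin n, (i:ℕ) < k → x i = p i).filter
        (fun x => x ⟨k, hk⟩ = true))
      = ((S.filter fun x => ∀ i : Fin n, (i:ℕ) < k → x i = p i).filter
        (fun x => ¬ (x ⟨k, hk⟩ = false))) := by
    apply Finset.filter_congr
    intro x _
    simp
  rw [cnt, cnt, cnt, h1 false, h1 true, h2]
  exact Finset.card_filter_add_card_filter_not (fun x : Fin n → Bool => x ⟨k, hk⟩ = false)
lemma cnt_mono (S : Finset (Fin n → Bool)) (k : ℕ) (p : Fin n → Bool) :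
    cnt S k p ≤ cnt (univ : Finset (Fin n → Bool)) k p :=
  Finset.card_le_card (Finset.filter_subset_filter _ (Finset.subset_univ S))

lemma cnt_univ (j : ℕ) : ∀ (k : ℕ) (p : Fin n → Bool), k + j = n →
    cnt (univ : Finset (Fin n → Bool)) k p = 2 ^ j := by
  induction j with
  | zero =>
    intro k p hk
    have hkn : k = n := by omega
    rw [cnt]
    have : (univ.filter fun x : Fin n → Bool => ∀ i : Fin n, (i:ℕ) < k → x i = p i) = {p} := by
      ext x
      simp only [mem_filter, mem_univ, true_and, Finset.mem_singleton]
      constructor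
      · intro h
        funext i
        exact h i (by omega)
      · rintro rfl i _
        rfl
    rw [this]
    simp
  | succ j ih =>
    intro k p hk
    have hkn : k < n := by omega
    rw [← cnt_split univ k hkn p, ih (k+1) _ (by omega), ih (k+1) _ (by omega), pow_succ]
    omega

lemma cnt_le_pow (S : Finset (Fin n → Bool)) (k : ℕ) (hk : k ≤ n) (p : Fin n → Bool) :
    cnt S k p ≤ 2 ^ (n - k) :=
  le_trans (cnt_mono S k p) (le_of_eq (cnt_univ (n - k) k p (by omega)))

lemma sum_cnt (S : Finset (Fin n → Bool)) (k : ℕ) :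
    ∑ p ∈ Pk n k, cnt S k p = S.card := by
  simp only [cnt, Finset.card_filter]
  rw [Finset.sum_comm]
  have : ∀ x ∈ S, (∑ p ∈ Pk n k, if ∀ i : Fin n, (i:ℕ) < k → x i = p i then 1 else 0) = 1 := by
    intro x _
    rw [Finset.sum_eq_single_of_mem (trunc k x) (trunc_mem_Pk k x)]
    · rw [if_pos]
      intro i hi
      rw [trunc, if_pos hi]
    · intro p hp hpt
      rw [if_neg]
      intro hpre
      apply hpt
      funext i
      by_cases hi : (i:ℕ) < k
      · rw [trunc, if_pos hi, ← hpre i hi]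
      · rw [trunc, if_neg hi]
        simp only [Pk, mem_filter, mem_univ, true_and] at hp
        exact hp i (by omega)
  rw [Finset.sum_congr rfl this, Finset.sum_const, smul_eq_mul, mul_one]

lemma setBit_mem_Pk_succ {p : Fin n → Bool} {k : ℕ} (hp : p ∈ Pk n k) (b : Bool) :
    setBit p k b ∈ Pk n (k+1) := by
  simp only [Pk, mem_filter, mem_univ, true_and] at hp ⊢
  intro i hi
  rw [setBit, if_neg (by omega)]
  exact hp i (by omega)

lemma sum_Pk_succ (k : ℕ) (hk : k < n) (f : (Fin n → Bool) → ℝ) :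
    ∑ q ∈ Pk n (k+1), f q = ∑ p ∈ Pk n k, (f (setBit p k false) + f (setBit p k true)) := by
  have : ∀ p ∈ Pk n k, f (setBit p k false) + f (setBit p k true)
      = ∑ b : Bool, f (setBit p k b) := by
    intro p _
    rw [Fintype.sum_bool]
    ring
  rw [Finset.sum_congr rfl this, ← Finset.sum_product']
  apply Finset.sum_nbij' (i := fun q => ((setBit q k false, q ⟨k, hk⟩) : (Fin n → Bool) × Bool))
    (j := fun pb : (Fin n → Bool) × Bool => setBit pb.1 k pb.2)
  · -- hi : q ∈ Pk (k+1) → pair ∈ product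
    intro q hq
    simp only [Finset.mem_product, Finset.mem_univ, and_true]
    simp only [Pk, mem_filter, mem_univ, true_and] at hq ⊢
    intro i hi
    rw [setBit]
    by_cases hik : (i:ℕ) = k
    · rw [if_pos hik]
    · rw [if_neg hik]
      exact hq i (by omega)
  · -- hj
    rintro ⟨p, b⟩ hpb
    simp only [Finset.mem_product] at hpb
    exact setBit_mem_Pk_succ hpb.1 b
  · -- left_inv : j (i q) = q
    intro q hq
    funext i
    by_cases hik : (i:ℕ) = k
    · simp only [setBit, if_pos hik]
      congr 1
      exact (Fin.ext hik.symm : (⟨k, hk⟩ : Fin n) = i)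
    · simp only [setBit, if_neg hik]
  · -- right_inv : i (j pb) = pb
    rintro ⟨p, b⟩ hpb
    simp only [Finset.mem_product] at hpb
    have hp := hpb.1
    simp only [Pk, mem_filter, mem_univ, true_and] at hp
    have h1 : setBit (setBit p k b) k false = p := by
      funext i
      by_cases hik : (i:ℕ) = k
      · simp only [setBit, if_pos hik]
        exact (hp i (by omega)).symm
      · simp only [setBit, if_neg hik]
    have h2 : (setBit p k b) ⟨k, hk⟩ = b := by
      simp [setBit]
    rw [Prod.mk.injEq]
    exact ⟨h1, h2⟩
  · intro q _
    have hq2 : setBit (setBit q k false) k (q ⟨k, hk⟩) = q := by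
      funext i
      by_cases hik : (i:ℕ) = k
      · simp only [setBit, if_pos hik]
        congr 1
        exact (Fin.ext hik.symm : (⟨k, hk⟩ : Fin n) = i)
      · simp only [setBit, if_neg hik]
    show f q = f (setBit (setBit q k false) k (q ⟨k, hk⟩))
    rw [hq2]
end GTAux
namespace GTAux
open Finset
variable {n : ℕ}

noncomputable def sq (S : Finset (Fin n → Bool)) (k : ℕ) : ℝ :=
  ∑ p ∈ Pk n k, ((cnt S k p : ℝ))^2

noncomputable def dd (S : Finset (Fin n → Bool)) (k : ℕ) : ℝ :=
  ∑ p ∈ Pk n k, ((cnt S (k+1) (setBit p k true) : ℝ) - (cnt S (k+1) (setBit p k false) : ℝ))^2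

lemma sq_nonneg' (S : Finset (Fin n → Bool)) (k : ℕ) : 0 ≤ sq S k :=
  Finset.sum_nonneg fun _ _ => sq_nonneg _

lemma dd_nonneg (S : Finset (Fin n → Bool)) (k : ℕ) : 0 ≤ dd S k :=
  Finset.sum_nonneg fun _ _ => sq_nonneg _

lemma sum_tf_sq (S : Finset (Fin n → Bool)) (k : ℕ) (hk : k < n) :
    ∑ p ∈ Pk n k, ((cnt S (k+1) (setBit p k true) : ℝ) + (cnt S (k+1) (setBit p k false) : ℝ))^2
      = sq S k := by
  rw [sq]
  apply Finset.sum_congr rfl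
  intro p _
  congr 1
  have := cnt_split S k hk p
  push_cast [← this]
  ring

lemma parseval (S : Finset (Fin n → Bool)) (k : ℕ) (hk : k < n) :
    dd S k = 2 * sq S (k+1) - sq S k := by
  have hsucc : sq S (k+1) = ∑ p ∈ Pk n k,
      (((cnt S (k+1) (setBit p k false) : ℝ))^2 + ((cnt S (k+1) (setBit p k true) : ℝ))^2) :=
    sum_Pk_succ k hk (fun q => ((cnt S (k+1) q : ℝ))^2)
  rw [hsucc, ← sum_tf_sq S k hk, dd, Finset.mul_sum, ← Finset.sum_sub_distrib]
  apply Finset.sum_congr rfl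
  intro p _
  ring

lemma telescope (S : Finset (Fin n → Bool)) :
    ∑ k ∈ Finset.range n, dd S k * 2^k = sq S n * 2^n - sq S 0 * 2^0 := by
  rw [← Finset.sum_range_sub (fun k => sq S k * 2^k) n]
  apply Finset.sum_congr rfl
  intro k hk
  rw [parseval S k (Finset.mem_range.mp hk), pow_succ]
  ring

lemma card_le_pow (S : Finset (Fin n → Bool)) : (S.card : ℝ) ≤ 2^n := by
  have h1 : S.card ≤ Fintype.card (Fin n → Bool) := Finset.card_le_univ S
  have h2 : Fintype.card (Fin n → Bool) = 2^n := by
    simp [Fintype.card_fun]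
  rw [h2] at h1
  exact_mod_cast h1

lemma sq_le (S : Finset (Fin n → Bool)) (k : ℕ) (hk : k ≤ n) :
    sq S k ≤ (2:ℝ)^(n-k) * 2^n := by
  have h1 : sq S k ≤ (2:ℝ)^(n-k) * ∑ p ∈ Pk n k, (cnt S k p : ℝ) := by
    rw [Finset.mul_sum, sq]
    apply Finset.sum_le_sum
    intro p _
    have hc : (cnt S k p : ℝ) ≤ 2^(n-k) := by
      have := cnt_le_pow S k hk p
      have h2 : ((2:ℕ)^(n-k) : ℝ) = (2:ℝ)^(n-k) := by push_cast; ring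
      rw [← h2]
      exact_mod_cast this
    have hc0 : (0:ℝ) ≤ (cnt S k p : ℝ) := Nat.cast_nonneg _
    nlinarith
  have h2 : (∑ p ∈ Pk n k, (cnt S k p : ℝ)) = (S.card : ℝ) := by
    rw [← sum_cnt S k]
    push_cast
    rfl
  rw [h2] at h1
  refine h1.trans ?_
  apply mul_le_mul_of_nonneg_left (card_le_pow S) (by positivity)

lemma dd_sum_le (S : Finset (Fin n → Bool)) :
    ∑ k ∈ Finset.range n, dd S k * 2^k ≤ (2:ℝ)^n * 2^n := by
  rw [telescope]
  have h1 : sq S n ≤ (2:ℝ)^(n-n) * 2^n := sq_le S n le_rfl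
  simp only [Nat.sub_self, pow_zero, one_mul] at h1
  nlinarith [sq_nonneg' S 0, h1, pow_pos (show (0:ℝ) < 2 by norm_num) n]

lemma cs {α : Type*} (s : Finset α) (f g : α → ℝ) :
    |∑ p ∈ s, f p * g p| ≤ Real.sqrt (∑ p ∈ s, (f p)^2) * Real.sqrt (∑ p ∈ s, (g p)^2) := by
  rw [← Real.sqrt_sq_eq_abs, ← Real.sqrt_mul (Finset.sum_nonneg fun _ _ => sq_nonneg _)]
  exact Real.sqrt_le_sqrt (Finset.sum_mul_sq_le_sq_mul_sq s f g)

lemma sum_sqrt_le (m : ℕ) (h : ℕ → ℝ) (hh : ∀ k ∈ Finset.range m, 0 ≤ h k) :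
    ∑ k ∈ Finset.range m, Real.sqrt (h k)
      ≤ Real.sqrt m * Real.sqrt (∑ k ∈ Finset.range m, h k) := by
  have := cs (Finset.range m) (fun _ => (1:ℝ)) (fun k => Real.sqrt (h k))
  simp only [one_mul, one_pow, Finset.sum_const, Finset.card_range, nsmul_eq_mul, mul_one] at this
  calc ∑ k ∈ Finset.range m, Real.sqrt (h k)
      ≤ |∑ k ∈ Finset.range m, Real.sqrt (h k)| := le_abs_self _
    _ ≤ Real.sqrt m * Real.sqrt (∑ k ∈ Finset.range m, (Real.sqrt (h k))^2) := by
        simpa using this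
    _ = Real.sqrt m * Real.sqrt (∑ k ∈ Finset.range m, h k) := by
        congr 1
        apply congrArg
        apply Finset.sum_congr rfl
        intro k hk
        exact Real.sq_sqrt (hh k hk)
end GTAux
namespace GTAux
open Finset
variable {n : ℕ}

lemma scal (n k : ℕ) (hk : k ≤ n) :
    (2:ℝ)^((k:ℤ)+1-2*(n:ℤ)) * (1/2) * Real.sqrt ((2:ℝ)^(n-k) * (2:ℝ)^n)
      = ((2:ℝ)^n)⁻¹ * Real.sqrt ((2:ℝ)^k) := by
  have h20 : (0:ℝ) < 2 := two_pos
  rw [← pow_add]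
  rw [show (2:ℝ)^((k:ℤ)+1-2*(n:ℤ)) = (2:ℝ) ^ (((k:ℝ)+1-2*(n:ℝ)) : ℝ) by
    rw [← Real.rpow_intCast]
    congr 1
    push_cast
    ring]
  rw [show ((2:ℝ)^n)⁻¹ = (2:ℝ) ^ ((-(n:ℝ)) : ℝ) by
    rw [Real.rpow_neg h20.le, Real.rpow_natCast]]
  rw [show ((1:ℝ)/2) = (2:ℝ) ^ ((-1:ℝ)) by rw [Real.rpow_neg_one]; norm_num]
  rw [Real.sqrt_eq_rpow, Real.sqrt_eq_rpow]
  rw [← Real.rpow_natCast 2 (n-k+n), ← Real.rpow_natCast 2 k]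
  rw [← Real.rpow_mul h20.le, ← Real.rpow_mul h20.le]
  rw [← Real.rpow_add h20, ← Real.rpow_add h20, ← Real.rpow_add h20]
  congr 1
  have hcast : ((n-k+n : ℕ) : ℝ) = 2*(n:ℝ) - (k:ℝ) := by
    rw [Nat.cast_add, Nat.cast_sub hk]
    ring
  rw [hcast]
  ring

lemma abs_combo {α : Type*} (s : Finset α) (a b c d : α → ℝ) :
    |∑ p ∈ s, (a p * d p - b p * c p)|
      ≤ (1/2) * (Real.sqrt (∑ p ∈ s, (a p - b p)^2) * Real.sqrt (∑ p ∈ s, (c p + d p)^2)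
        + Real.sqrt (∑ p ∈ s, (a p + b p)^2) * Real.sqrt (∑ p ∈ s, (c p - d p)^2)) := by
  have key : ∀ p ∈ s, a p * d p - b p * c p
      = (1/2) * ((a p - b p) * (c p + d p)) - (1/2) * ((a p + b p) * (c p - d p)) := by
    intro p _
    ring
  rw [Finset.sum_congr rfl key, Finset.sum_sub_distrib, ← Finset.mul_sum, ← Finset.mul_sum]
  have hU := cs s (fun p => a p - b p) (fun p => c p + d p)
  have hV := cs s (fun p => a p + b p) (fun p => c p - d p)
  have habs : |1/2 * (∑ p ∈ s, (a p - b p) * (c p + d p))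
        - 1/2 * (∑ p ∈ s, (a p + b p) * (c p - d p))|
      ≤ |1/2 * (∑ p ∈ s, (a p - b p) * (c p + d p))|
        + |1/2 * (∑ p ∈ s, (a p + b p) * (c p - d p))| := by
    rw [sub_eq_add_neg]
    refine (abs_add_le _ _).trans ?_
    rw [abs_neg]
  refine habs.trans ?_
  rw [abs_mul, abs_mul, show |(1:ℝ)/2| = 1/2 by norm_num]
  have h1 := mul_le_mul_of_nonneg_left hU (by norm_num : (0:ℝ) ≤ 1/2)
  have h2 := mul_le_mul_of_nonneg_left hV (by norm_num : (0:ℝ) ≤ 1/2)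
  linarith

lemma inner_bound (S T : Finset (Fin n → Bool)) (k : ℕ) (hk : k < n) :
    |∑ p ∈ Pk n k,
        ((cnt S (k+1) (setBit p k true) : ℝ) * (cnt T (k+1) (setBit p k false) : ℝ)
         - (cnt S (k+1) (setBit p k false) : ℝ) * (cnt T (k+1) (setBit p k true) : ℝ))|
      ≤ (1/2) * (Real.sqrt (dd S k) * Real.sqrt (sq T k)
         + Real.sqrt (sq S k) * Real.sqrt (dd T k)) := by
  have h := abs_combo (Pk n k)
      (fun p => (cnt S (k+1) (setBit p k true) : ℝ))
      (fun p => (cnt S (k+1) (setBit p k false) : ℝ))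
      (fun p => (cnt T (k+1) (setBit p k true) : ℝ))
      (fun p => (cnt T (k+1) (setBit p k false) : ℝ))
  have e1 : (∑ p ∈ Pk n k,
      ((cnt S (k+1) (setBit p k true) : ℝ) - (cnt S (k+1) (setBit p k false) : ℝ))^2)
      = dd S k := rfl
  have e4 : (∑ p ∈ Pk n k,
      ((cnt T (k+1) (setBit p k true) : ℝ) - (cnt T (k+1) (setBit p k false) : ℝ))^2)
      = dd T k := rfl
  rw [e1, e4, sum_tf_sq T k hk, sum_tf_sq S k hk] at h
  exact h

lemma w_nonneg (n k : ℕ) : 0 ≤ w n k := by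
  rw [w]
  positivity

lemma term_bound (S T : Finset (Fin n → Bool)) (k : ℕ) (hk : k < n) :
    |w n k * ∑ p ∈ Pk n k,
        ((cnt S (k+1) (setBit p k true) : ℝ) * (cnt T (k+1) (setBit p k false) : ℝ)
         - (cnt S (k+1) (setBit p k false) : ℝ) * (cnt T (k+1) (setBit p k true) : ℝ))|
      ≤ (1/(n:ℝ)) * ((2:ℝ)^n)⁻¹ *
        (Real.sqrt (dd S k * 2^k) + Real.sqrt (dd T k * 2^k)) := by
  rw [abs_mul, abs_of_nonneg (w_nonneg n k)]
  set Z := Real.sqrt ((2:ℝ)^(n-k) * (2:ℝ)^n) with hZ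
  have hZ0 : 0 ≤ Z := Real.sqrt_nonneg _
  have hsqS : Real.sqrt (sq S k) ≤ Z := Real.sqrt_le_sqrt (sq_le S k hk.le)
  have hsqT : Real.sqrt (sq T k) ≤ Z := Real.sqrt_le_sqrt (sq_le T k hk.le)
  have hddS0 : 0 ≤ Real.sqrt (dd S k) := Real.sqrt_nonneg _
  have hddT0 : 0 ≤ Real.sqrt (dd T k) := Real.sqrt_nonneg _
  calc w n k * |∑ p ∈ Pk n k, _|
      ≤ w n k * ((1/2) * (Real.sqrt (dd S k) * Real.sqrt (sq T k)
         + Real.sqrt (sq S k) * Real.sqrt (dd T k))) :=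
        mul_le_mul_of_nonneg_left (inner_bound S T k hk) (w_nonneg n k)
    _ ≤ w n k * ((1/2) * (Real.sqrt (dd S k) * Z + Z * Real.sqrt (dd T k))) := by
        apply mul_le_mul_of_nonneg_left _ (w_nonneg n k)
        apply mul_le_mul_of_nonneg_left _ (by norm_num)
        exact add_le_add (mul_le_mul_of_nonneg_left hsqT hddS0)
          (mul_le_mul_of_nonneg_right hsqS hddT0)
    _ = (1/(n:ℝ)) * ((2:ℝ)^((k:ℤ)+1-2*(n:ℤ)) * (1/2) * Z) *
          (Real.sqrt (dd S k) + Real.sqrt (dd T k)) := by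
        rw [w]
        ring
    _ = (1/(n:ℝ)) * (((2:ℝ)^n)⁻¹ * Real.sqrt ((2:ℝ)^k)) *
          (Real.sqrt (dd S k) + Real.sqrt (dd T k)) := by
        rw [hZ, scal n k hk.le]
    _ = (1/(n:ℝ)) * ((2:ℝ)^n)⁻¹ *
        (Real.sqrt (dd S k * 2^k) + Real.sqrt (dd T k * 2^k)) := by
        rw [Real.sqrt_mul (dd_nonneg S k), Real.sqrt_mul (dd_nonneg T k)]
        ring
end GTAux

/-- For every `n ≥ 1`, the discrepancy of `GT_n` w.r.t. `μ_n`, i.e. the maximum of `|D_n(R)|`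
over all rectangles `R = S × T`, is less than `20/√n`. -/
theorem discGT_lt (n : ℕ) (hn : 1 ≤ n) (S T : Finset (Fin n → Bool)) :
    |discGT n S T| < 20 / Real.sqrt n := by
  classical
  have hn0 : (0:ℝ) < n := by exact_mod_cast hn
  have hsn : 0 < Real.sqrt n := Real.sqrt_pos.mpr hn0
  have h2n : (0:ℝ) < (2:ℝ)^n := by positivity
  set F : ℕ → ℝ := fun k => GTAux.w n k * ∑ p ∈ GTAux.Pk n k,
      ((GTAux.cnt S (k+1) (GTAux.setBit p k true) : ℝ) *
        (GTAux.cnt T (k+1) (GTAux.setBit p k false) : ℝ)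
       - (GTAux.cnt S (k+1) (GTAux.setBit p k false) : ℝ) *
        (GTAux.cnt T (k+1) (GTAux.setBit p k true) : ℝ)) with hF
  have h0 : discGT n S T = ∑ k ∈ Finset.range n, F k := by
    rw [GTAux.discGT_eq S T]
    exact Fin.sum_univ_eq_sum_range F n
  rw [h0]
  have hmain : |∑ k ∈ Finset.range n, F k| ≤ 2 / Real.sqrt n := by
    calc |∑ k ∈ Finset.range n, F k|
        ≤ ∑ k ∈ Finset.range n, |F k| := Finset.abs_sum_le_sum_abs _ _
      _ ≤ ∑ k ∈ Finset.range n, (1/(n:ℝ)) * ((2:ℝ)^n)⁻¹ *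
            (Real.sqrt (GTAux.dd S k * 2^k) + Real.sqrt (GTAux.dd T k * 2^k)) := by
          apply Finset.sum_le_sum
          intro k hk
          exact GTAux.term_bound S T k (Finset.mem_range.mp hk)
      _ = (1/(n:ℝ)) * ((2:ℝ)^n)⁻¹ *
            ((∑ k ∈ Finset.range n, Real.sqrt (GTAux.dd S k * 2^k))
             + (∑ k ∈ Finset.range n, Real.sqrt (GTAux.dd T k * 2^k))) := by
          rw [mul_add, Finset.mul_sum, Finset.mul_sum, ← Finset.sum_add_distrib]
          apply Finset.sum_congr rfl
          intro k _
          ring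
      _ ≤ (1/(n:ℝ)) * ((2:ℝ)^n)⁻¹ *
            ((Real.sqrt n * Real.sqrt (∑ k ∈ Finset.range n, GTAux.dd S k * 2^k))
             + (Real.sqrt n * Real.sqrt (∑ k ∈ Finset.range n, GTAux.dd T k * 2^k))) := by
          apply mul_le_mul_of_nonneg_left _ (by positivity)
          exact add_le_add
            (GTAux.sum_sqrt_le n _ (fun k _ =>
              mul_nonneg (GTAux.dd_nonneg S k) (by positivity)))
            (GTAux.sum_sqrt_le n _ (fun k _ =>
              mul_nonneg (GTAux.dd_nonneg T k) (by positivity)))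
      _ ≤ (1/(n:ℝ)) * ((2:ℝ)^n)⁻¹ *
            ((Real.sqrt n * Real.sqrt ((2:ℝ)^n * 2^n))
             + (Real.sqrt n * Real.sqrt ((2:ℝ)^n * 2^n))) := by
          apply mul_le_mul_of_nonneg_left _ (by positivity)
          have hS := Real.sqrt_le_sqrt (GTAux.dd_sum_le S)
          have hT := Real.sqrt_le_sqrt (GTAux.dd_sum_le T)
          exact add_le_add (mul_le_mul_of_nonneg_left hS (Real.sqrt_nonneg _))
            (mul_le_mul_of_nonneg_left hT (Real.sqrt_nonneg _))
      _ = 2 / Real.sqrt n := by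
          rw [Real.sqrt_mul_self h2n.le]
          have h1 : (1/(n:ℝ)) * ((2:ℝ)^n)⁻¹ *
              (Real.sqrt n * 2^n + Real.sqrt n * 2^n) = 2 * Real.sqrt n / n := by
            field_simp
            ring
          rw [h1, div_eq_div_iff hn0.ne' hsn.ne', mul_assoc, Real.mul_self_sqrt hn0.le]
  calc |∑ k ∈ Finset.range n, F k| ≤ 2 / Real.sqrt n := hmain
    _ < 20 / Real.sqrt n := by
        gcongr
        norm_num
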